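/- Let m, n ≥ 1 and let C be a positive semidefinite complex matrix indexed by Fin m × Fin n satisfying the channel normalization: for all g, g' ∈ Fin n, ∑_{f ∈ Fin m} C ((f,g),(f,g')) equals 1 if g = g' and 0 otherwise (i.e. the partial trace of C over the first (output) factor is the identity matrix I_n). If ρ₀ is a density matrix on Fin m such that (ρ₀ ⊗ I_n) − C is positive semidefinite, then C = ρ₀ ⊗ I_n. (In other words, a quantum channel can satisfy the causality bound with probability p = 1 only if it is an erasure channel.) -/

import Mathlib

open Matrix
open scoped Kronecker ComplexOrder

lemma psd_trace_zero_eq_zero {k : Type*} [Fintype k] [DecidableEq k]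
    (D : Matrix k k ℂ) (hD : D.PosSemidef) (htr : D.trace = 0) : D = 0 := by
  obtain ⟨B, hB⟩ : ∃ B : Matrix k k ℂ, D = Bᴴ * B := by
    open scoped MatrixOrder in
    obtain ⟨B, hB⟩ := CStarAlgebra.nonneg_iff_eq_star_mul_self.mp hD.nonneg
    exact ⟨B, hB⟩
  subst hB
  rw [Matrix.conjTranspose_mul_self_eq_zero]
  have h : ∑ i : k, ∑ j : k, Complex.normSq (B j i) = 0 := by
    have : (Bᴴ * B).trace = ((∑ i : k, ∑ j : k, Complex.normSq (B j i) : ℝ) : ℂ) := by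
      simp only [Matrix.trace, Matrix.diag, Matrix.mul_apply, Matrix.conjTranspose_apply]
      push_cast
      congr 1; ext i; congr 1; ext j
      rw [Complex.normSq_eq_conj_mul_self]; rfl
    rw [this] at htr
    exact_mod_cast htr
  ext i j
  have := (Finset.sum_eq_zero_iff_of_nonneg (fun x _ => Finset.sum_nonneg
    (fun y _ => Complex.normSq_nonneg (B y x)))).mp h j (Finset.mem_univ j)
  have := (Finset.sum_eq_zero_iff_of_nonneg
    (fun y _ => Complex.normSq_nonneg (B y j))).mp this i (Finset.mem_univ i)
  simpa using Complex.normSq_eq_zero.mp this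

/-- A quantum channel (given by its Choi matrix `C`) can satisfy the causality bound
with probability `p = 1` only if it is an erasure channel. -/
theorem erasure_of_prob_one (m n : ℕ) (hm : 1 ≤ m) (hn : 1 ≤ n)
    (C : Matrix (Fin m × Fin n) (Fin m × Fin n) ℂ)
    (hC : C.PosSemidef)
    (hTr : ∀ g g' : Fin n, ∑ f : Fin m, C (f, g) (f, g') = if g = g' then 1 else 0)
    (ρ₀ : Matrix (Fin m) (Fin m) ℂ) (hρ₀ : ρ₀.PosSemidef) (hρ₀tr : ρ₀.trace = 1)
    (hle : (ρ₀ ⊗ₖ (1 : Matrix (Fin n) (Fin n) ℂ) - C).PosSemidef) :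
    C = ρ₀ ⊗ₖ (1 : Matrix (Fin n) (Fin n) ℂ) := by
  have hCtr : C.trace = (n : ℂ) := by
    simp only [Matrix.trace, Matrix.diag, Fintype.sum_prod_type]
    rw [Finset.sum_comm]
    simp [hTr]
  have hKtr : (ρ₀ ⊗ₖ (1 : Matrix (Fin n) (Fin n) ℂ)).trace = (n : ℂ) := by
    rw [Matrix.trace_kronecker, hρ₀tr, Matrix.trace_one]
    simp
  have h0 : (ρ₀ ⊗ₖ (1 : Matrix (Fin n) (Fin n) ℂ) - C) = 0 :=
    psd_trace_zero_eq_zero _ hle (by rw [Matrix.trace_sub, hCtr, hKtr, sub_self])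
  have := sub_eq_zero.mp h0
  exact this.symm
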